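/- Let G be a connected vertex-transitive graph with ω(G) ≥ (2/3)(Δ(G)+1), and let Q be the collection of all maximum cliques of G. Then either X_Q is edgeless, or X_Q is a cycle and G is isomorphic to the graph obtained from this cycle by replacing each vertex with a clique on ω(G)/2 vertices (blow-up of a cycle by K_{ω(G)/2}). -/

import Mathlib

open SimpleGraph Finset

/-- A graph is vertex-transitive if its automorphism group acts transitively
on the vertices. -/
def VertexTransitive {V : Type*} (G : SimpleGraph V) : Prop :=
  ∀ u v : V, ∃ e : G ≃g G, e u = v

/-- The intersection graph `X_Q` of a collection `Q` of cliques. -/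
def interGraph {V : Type*} [DecidableEq V] (Q : Set (Finset V)) :
    SimpleGraph Q where
  Adj A B := A ≠ B ∧ ((A : Finset V) ∩ (B : Finset V)).Nonempty
  symm := by
    constructor
    rintro A B ⟨hne, h⟩
    exact ⟨hne.symm, by rwa [Finset.inter_comm]⟩
  loopless := by constructor; rintro A ⟨hne, -⟩; exact hne rfl

/-- The blow-up of a graph `H` obtained by replacing each vertex with a copy of
`K_r`, joining all vertices of copies corresponding to adjacent vertices. -/
def blowup {α : Type*} (H : SimpleGraph α) (r : ℕ) : SimpleGraph (α × Fin r) where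
  Adj x y := H.Adj x.1 y.1 ∨ (x.1 = y.1 ∧ x.2 ≠ y.2)
  symm := by
    constructor
    rintro x y (h | ⟨h1, h2⟩)
    · exact Or.inl h.symm
    · exact Or.inr ⟨h1.symm, h2.symm⟩
  loopless := by constructor; rintro x (h | ⟨-, h2⟩); exacts [H.loopless.irrefl _ h, h2 rfl]

section Aux

variable {V : Type*} [Fintype V] [DecidableEq V] (G : SimpleGraph V) [DecidableRel G.Adj]

/-- The maximum cliques containing `v`. -/
noncomputable def cliquesAt (v : V) : Finset (Finset V) :=
  Finset.univ.filter (fun A => G.IsNClique G.cliqueNum A ∧ v ∈ A)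

/-- The kernel of `v`: the intersection of all maximum cliques containing `v`. -/
noncomputable def ker (v : V) : Finset V := (cliquesAt G v).inf id

/-- Adjacency of kernels: both are kernels, disjoint, union is a maximum clique. -/
def KAdj (K K' : Finset V) : Prop :=
  (∃ a, K = ker G a) ∧ (∃ b, K' = ker G b) ∧ Disjoint K K' ∧
    G.IsNClique G.cliqueNum (K ∪ K')

variable {G}

lemma mem_cliquesAt {A : Finset V} {v : V} :
    A ∈ cliquesAt G v ↔ G.IsNClique G.cliqueNum A ∧ v ∈ A := by
  simp [cliquesAt]

lemma ker_subset {A : Finset V} {v : V} (h : A ∈ cliquesAt G v) : ker G v ⊆ A :=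
  Finset.inf_le (α := Finset V) h

lemma mem_ker_self {v : V} (h : (cliquesAt G v).Nonempty) : v ∈ ker G v := by
  have h2 : ({v} : Finset V) ≤ (cliquesAt G v).inf id := by
    refine Finset.le_inf fun A hA => ?_
    simp only [id]
    exact Finset.singleton_subset_iff.mpr (mem_cliquesAt.1 hA).2
  exact Finset.singleton_subset_iff.mp h2

lemma KAdj.symm {K K' : Finset V} (h : KAdj G K K') : KAdj G K' K := by
  obtain ⟨h1, h2, h3, h4⟩ := h
  exact ⟨h2, h1, h3.symm, by rwa [Finset.union_comm]⟩

lemma KAdj.ne {K K' : Finset V} (hself : ∀ x, x ∈ ker G x) (h : KAdj G K K') : K ≠ K' := by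
  obtain ⟨⟨a, rfl⟩, h2, h3, h4⟩ := h
  intro he
  have : ker G a = ∅ := (Finset.disjoint_self_iff_empty _).mp (he ▸ h3)
  exact Finset.eq_empty_iff_forall_notMem.mp this a (hself a)

/-- Hajnal's lemma for families of maximum cliques. -/
lemma hajnal (F : Finset (Finset V)) (hne : F.Nonempty)
    (hF : ∀ A ∈ F, G.IsNClique G.cliqueNum A) :
    2 * G.cliqueNum ≤ (F.inf id).card + (F.sup id).card := by
  classical
  induction hne using Finset.Nonempty.cons_induction with
  | singleton A =>
    have h1 := (hF A (Finset.mem_singleton_self A)).card_eq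
    simp only [Finset.inf_singleton, Finset.sup_singleton, id]
    omega
  | cons A F hA hne ih =>
    have hF' : ∀ B ∈ F, G.IsNClique G.cliqueNum B := fun B hB =>
      hF B (Finset.mem_cons_of_mem hB)
    have hAc : G.IsNClique G.cliqueNum A := hF A (Finset.mem_cons_self A F)
    have ih' := ih hF'
    set D := F.inf id with hD
    set S := F.sup id with hS
    obtain ⟨B, hB⟩ := hne
    have hDB : D ⊆ B := by simpa using Finset.inf_le (f := id) hB
    -- D ∪ (A ∩ S) is a clique
    have hclique : G.IsClique (↑(D ∪ (A ∩ S)) : Set V) := by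
      intro x hx y hy hxy
      have hx' : x ∈ D ∨ (x ∈ A ∧ x ∈ S) := by
        simpa [Finset.mem_union, Finset.mem_inter] using hx
      have hy' : y ∈ D ∨ (y ∈ A ∧ y ∈ S) := by
        simpa [Finset.mem_union, Finset.mem_inter] using hy
      rcases hx' with hxD | ⟨hxA, hxS⟩ <;> rcases hy' with hyD | ⟨hyA, hyS⟩
      · exact (hF' B hB).1 (Finset.mem_coe.mpr (hDB hxD)) (Finset.mem_coe.mpr (hDB hyD)) hxy
      · obtain ⟨C, hC, hyC⟩ := Finset.mem_sup.mp hyS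
        have hsubC : D ⊆ C := by simpa using Finset.inf_le (f := id) hC
        exact (hF' C hC).1 (Finset.mem_coe.mpr (hsubC hxD))
          (Finset.mem_coe.mpr hyC) hxy
      · obtain ⟨C, hC, hxC⟩ := Finset.mem_sup.mp hxS
        have hsubC : D ⊆ C := by simpa using Finset.inf_le (f := id) hC
        exact (hF' C hC).1 (Finset.mem_coe.mpr hxC)
          (Finset.mem_coe.mpr (hsubC hyD)) hxy
      · exact hAc.1 (Finset.mem_coe.mpr hxA) (Finset.mem_coe.mpr hyA) hxy
    have hcard : (D ∪ (A ∩ S)).card ≤ G.cliqueNum :=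
      SimpleGraph.IsClique.card_le_cliqueNum (tc := hclique)
    have hdisj : Disjoint (D \ A) (A ∩ S) := by
      rw [Finset.disjoint_left]
      intro x hx hx2
      exact (Finset.mem_sdiff.mp hx).2 (Finset.mem_inter.mp hx2).1
    have e3 : (D \ A).card + (A ∩ S).card ≤ G.cliqueNum := by
      have hsub : (D \ A) ∪ (A ∩ S) ⊆ D ∪ (A ∩ S) :=
        Finset.union_subset_union Finset.sdiff_subset (le_refl _)
      calc (D \ A).card + (A ∩ S).card = ((D \ A) ∪ (A ∩ S)).card :=
            (Finset.card_union_of_disjoint hdisj).symm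
        _ ≤ (D ∪ (A ∩ S)).card := Finset.card_le_card hsub
        _ ≤ G.cliqueNum := hcard
    have e1 : (D ∩ A).card + (D \ A).card = D.card := Finset.card_inter_add_card_sdiff D A
    have e2 : (A ∪ S).card + (A ∩ S).card = A.card + S.card := by
      rw [Finset.card_union_add_card_inter]
    have e4 : A.card = G.cliqueNum := hAc.card_eq
    have goal_eq1 : ((Finset.cons A F hA).inf id) = A ∩ D := by
      rw [Finset.inf_cons]; rfl
    have goal_eq2 : ((Finset.cons A F hA).sup id) = A ∪ S := by
      rw [Finset.sup_cons]; rfl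
    rw [goal_eq1, goal_eq2]
    have e5 : (A ∩ D).card = (D ∩ A).card := by rw [Finset.inter_comm]
    omega

/-- Images of cliques under automorphisms. -/
lemma isNClique_image (e : G ≃g G) {n : ℕ} {s : Finset V} (h : G.IsNClique n s) :
    G.IsNClique n (s.image e) := by
  constructor
  · rintro x hx y hy hxy
    simp only [Finset.coe_image, Set.mem_image, Finset.mem_coe] at hx hy
    obtain ⟨a, ha, rfl⟩ := hx
    obtain ⟨b, hb, rfl⟩ := hy
    have hab : a ≠ b := fun hh => hxy (by rw [hh])
    exact e.map_rel_iff.mpr (h.1 (Finset.mem_coe.mpr ha) (Finset.mem_coe.mpr hb) hab)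
  · rw [Finset.card_image_of_injective _ e.injective]; exact h.2

lemma cliquesAt_image (e : G ≃g G) (v : V) :
    cliquesAt G (e v) = (cliquesAt G v).image (fun A => A.image e) := by
  ext A
  simp only [mem_cliquesAt, Finset.mem_image]
  constructor
  · rintro ⟨hA, hv⟩
    refine ⟨A.image e.symm, ⟨isNClique_image e.symm hA, ?_⟩, ?_⟩
    · exact Finset.mem_image.mpr ⟨e v, hv, e.symm_apply_apply v⟩
    · rw [Finset.image_image]
      ext x
      simp only [Finset.mem_image, Function.comp_apply]
      constructor
      · rintro ⟨y, hy, rfl⟩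
        rwa [e.apply_symm_apply]
      · intro hx
        exact ⟨x, hx, e.apply_symm_apply x⟩
  · rintro ⟨B, ⟨hB1, hB2⟩, rfl⟩
    exact ⟨isNClique_image e hB1, Finset.mem_image.mpr ⟨v, hB2, rfl⟩⟩

lemma inf_image_inj {f : V → V} (hinj : Function.Injective f)
    (hsurj : Function.Surjective f) (F : Finset (Finset V)) :
    F.inf (fun A => A.image f) = (F.inf id).image f := by
  classical
  induction F using Finset.cons_induction with
  | empty =>
    simp only [Finset.inf_empty]
    ext x
    simp only [Finset.top_eq_univ, Finset.mem_univ, Finset.mem_image, true_iff]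
    obtain ⟨y, rfl⟩ := hsurj x
    exact ⟨y, trivial, rfl⟩
  | cons A F hA ih =>
    rw [Finset.inf_cons, Finset.inf_cons, ih]
    simp only [id, Finset.inf_eq_inter]
    exact (Finset.image_inter _ _ hinj).symm

lemma ker_image (e : G ≃g G) (v : V) : ker G (e v) = (ker G v).image e := by
  rw [ker, ker, cliquesAt_image e v, Finset.inf_image]
  exact inf_image_inj e.injective e.surjective _

variable (G)

/-- The other kernel adjacent to `C`, different from `P`. -/
noncomputable def otherK (P C : Finset V) : Finset V :=
  letI := Classical.dec (∃ K, KAdj G C K ∧ K ≠ P)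
  if h : ∃ K, KAdj G C K ∧ K ≠ P then h.choose else ∅

/-- The sequence of kernels around the cycle. -/
noncomputable def kseq (K0 K1 : Finset V) : ℕ → Finset V
  | 0 => K0
  | 1 => K1
  | (t+2) => otherK G (kseq K0 K1 t) (kseq K0 K1 (t+1))

variable {G}

lemma kseq_two (K0 K1 : Finset V) (t : ℕ) :
    kseq G K0 K1 (t+2) = otherK G (kseq G K0 K1 t) (kseq G K0 K1 (t+1)) := by
  rw [kseq]

/-- Stage 2: from the kernel structure, build the cycle and the isomorphisms. -/
lemma stage2 (hconn : G.Connected) (v0 : V) (r : ℕ) (hr : 1 ≤ r)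
    (hω : G.cliqueNum = 2 * r)
    (hpart : ∀ x y, x ∈ ker G y → ker G x = ker G y)
    (hcard : ∀ x, (ker G x).card = r)
    (hself : ∀ x, x ∈ ker G x)
    (hadj_ker : ∀ x y, x ∈ ker G y → x ≠ y → G.Adj x y)
    (hsplit : ∀ A, G.IsNClique G.cliqueNum A → ∀ v ∈ A,
      ∃ w, Disjoint (ker G v) (ker G w) ∧ A = ker G v ∪ ker G w)
    (hstruct : ∀ x, ∃ K1 K2, K1 ≠ K2 ∧ (∀ K, KAdj G (ker G x) K ↔ K = K1 ∨ K = K2) ∧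
      insert x (G.neighborFinset x) = ker G x ∪ (K1 ∪ K2)) :
    ∃ n : ℕ, 3 ≤ n ∧
      Nonempty (interGraph {s : Finset V | G.IsNClique G.cliqueNum s} ≃g cycleGraph n) ∧
      Nonempty (G ≃g blowup (cycleGraph n) r) := by
  classical
  -- `otherK` specification
  have hother : ∀ C P, KAdj G C P → KAdj G C (otherK G P C) ∧ otherK G P C ≠ P := by
    intro C P hCP
    obtain ⟨x, hx⟩ := hCP.1
    obtain ⟨K1, K2, h12, hiff, -⟩ := hstruct x
    rw [← hx] at hiff
    have hex : ∃ K, KAdj G C K ∧ K ≠ P := by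
      rcases (hiff P).mp hCP with rfl | rfl
      · exact ⟨K2, (hiff K2).mpr (Or.inr rfl), h12.symm⟩
      · exact ⟨K1, (hiff K1).mpr (Or.inl rfl), h12⟩
    rw [otherK]
    simp only [dif_pos hex]
    exact hex.choose_spec
  have huniq : ∀ C P X, KAdj G C P → KAdj G C X → X ≠ P → X = otherK G P C := by
    intro C P X h1 h2 hne
    obtain ⟨x, hx⟩ := h1.1
    obtain ⟨K1, K2, h12, hiff, -⟩ := hstruct x
    rw [← hx] at hiff
    obtain ⟨hO1, hO2⟩ := hother C P h1
    rcases (hiff P).mp h1 with rfl | rfl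
    · rcases (hiff X).mp h2 with rfl | rfl
      · exact absurd rfl hne
      · rcases (hiff _).mp hO1 with h | h
        · exact absurd h hO2
        · exact h.symm
    · rcases (hiff X).mp h2 with rfl | rfl
      · rcases (hiff _).mp hO1 with h | h
        · exact h.symm
        · exact absurd h hO2
      · exact absurd rfl hne
  -- initial step
  obtain ⟨Kinit, K2init, hKinit12, hKinitiff, -⟩ := hstruct v0
  set S : ℕ → Finset V := kseq G (ker G v0) Kinit with hSdef
  have hS0 : S 0 = ker G v0 := rfl
  have hS1 : S 1 = Kinit := rfl
  have hS2 : ∀ t, S (t+2) = otherK G (S t) (S (t+1)) := fun t => kseq_two _ _ t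
  have base : KAdj G (S 0) (S 1) := by
    rw [hS0, hS1]
    exact (hKinitiff Kinit).mpr (Or.inl rfl)
  have inv : ∀ t, KAdj G (S t) (S (t+1)) := by
    intro t
    induction t with
    | zero => exact base
    | succ t ih =>
      rw [hS2 t]
      exact (hother (S (t+1)) (S t) ih.symm).1
  have hne2 : ∀ t, S (t+2) ≠ S t := by
    intro t
    rw [hS2 t]
    exact (hother (S (t+1)) (S t) (inv t).symm).2
  have hcons : ∀ t, S t ≠ S (t+1) := fun t => KAdj.ne hself (inv t)
  have hback : ∀ t, S t = otherK G (S (t+2)) (S (t+1)) :=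
    fun t => huniq (S (t+1)) (S (t+2)) (S t) (inv (t+1)) (inv t).symm (Ne.symm (hne2 t))
  -- forward determinism
  have hdet : ∀ a b, S a = S b → S (a+1) = S (b+1) →
      ∀ t, S (a+t) = S (b+t) ∧ S (a+t+1) = S (b+t+1) := by
    intro a b h0 h1 t
    induction t with
    | zero => exact ⟨h0, h1⟩
    | succ t ih =>
      refine ⟨ih.2, ?_⟩
      have e1 : S (a+t+2) = otherK G (S (a+t)) (S (a+t+1)) := hS2 (a+t)
      have e2 : S (b+t+2) = otherK G (S (b+t)) (S (b+t+1)) := hS2 (b+t)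
      show S (a+t+2) = S (b+t+2)
      rw [e1, e2, ih.1, ih.2]
  -- backward determinism
  have hdetb : ∀ a b, S a = S b → S (a+1) = S (b+1) → ∀ t, t ≤ a → t ≤ b →
      S (a-t) = S (b-t) ∧ S (a-t+1) = S (b-t+1) := by
    intro a b h0 h1 t
    induction t with
    | zero => intro _ _; simpa using ⟨h0, h1⟩
    | succ t ih =>
      intro hta htb
      obtain ⟨e1, e2⟩ := ih (by omega) (by omega)
      have e1' : S (a-t) = S (b-t) := e1
      constructor
      · have ha' : S (a-(t+1)) = otherK G (S (a-(t+1)+2)) (S (a-(t+1)+1)) := hback _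
        have hb' : S (b-(t+1)) = otherK G (S (b-(t+1)+2)) (S (b-(t+1)+1)) := hback _
        rw [show a-(t+1)+2 = (a-t)+1 by omega, show a-(t+1)+1 = a-t by omega] at ha'
        rw [show b-(t+1)+2 = (b-t)+1 by omega, show b-(t+1)+1 = b-t by omega] at hb'
        rw [ha', hb', e1, e2]
      · rw [show a-(t+1)+1 = a-t by omega, show b-(t+1)+1 = b-t by omega]
        exact e1'
  -- a pair equality yields a period
  have hperiod_of : ∀ a b, a ≤ b → S a = S b → S (a+1) = S (b+1) →
      ∀ t, S (t + (b-a)) = S t := by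
    intro a b hab h0 h1 t
    rcases le_or_gt a t with h | h
    · have h2 := (hdet a b h0 h1 (t-a)).1
      rw [show a + (t-a) = t by omega, show b + (t-a) = t + (b-a) by omega] at h2
      exact h2.symm
    · have h2 := (hdetb a b h0 h1 (a-t) (by omega) (by omega)).1
      rw [show a - (a-t) = t by omega, show b - (a-t) = t + (b-a) by omega] at h2
      exact h2.symm
  -- existence of a period
  have hex_period : ∃ p, 0 < p ∧ ∀ t, S (t + p) = S t := by
    obtain ⟨a, b, hab, hfab⟩ :=
      Finite.exists_ne_map_eq_of_infinite (fun t : ℕ => (S t, S (t+1)))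
    have h0 : S a = S b := congrArg Prod.fst hfab
    have h1 : S (a+1) = S (b+1) := congrArg Prod.snd hfab
    rcases Nat.lt_or_ge a b with h | h
    · exact ⟨b - a, by omega, hperiod_of a b (by omega) h0 h1⟩
    · have hba : b < a := by omega
      exact ⟨a - b, by omega, hperiod_of b a (by omega) h0.symm h1.symm⟩
  obtain ⟨n, hn0, hper, hmin⟩ : ∃ n, 0 < n ∧ (∀ t, S (t+n) = S t) ∧
      ∀ m, 0 < m → (∀ t, S (t+m) = S t) → n ≤ m :=
    ⟨Nat.find hex_period, (Nat.find_spec hex_period).1, (Nat.find_spec hex_period).2,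
      fun m h1 h2 => Nat.find_le ⟨h1, h2⟩⟩
  have hmul : ∀ q t, S (t + q * n) = S t := by
    intro q
    induction q with
    | zero => intro t; simp
    | succ q ih =>
      intro t
      rw [show t + (q+1) * n = (t + q * n) + n by ring, hper, ih]
  have hmod : ∀ t, S (t % n) = S t := by
    intro t
    have h := hmul (t / n) (t % n)
    rw [Nat.mod_add_div' t n] at h
    exact h.symm
  have hmod2 : ∀ p q, p % n = q % n → S p = S q := by
    intro p q h
    rw [← hmod p, ← hmod q, h]
  have hn3 : 3 ≤ n := by
    by_contra h
    push_neg at h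
    interval_cases n
    · exact hcons 0 (hper 0).symm
    · exact hne2 0 (hper 0)
  -- kernels along the sequence
  have is_ker : ∀ t, ∃ x, S t = ker G x := fun t => (inv t).1
  have mem_S_ker : ∀ t y, y ∈ S t → ker G y = S t := by
    intro t y hy
    obtain ⟨x, hx⟩ := is_ker t
    rw [hx] at hy ⊢
    exact hpart y x hy
  have hcardS : ∀ t, (S t).card = r := by
    intro t
    obtain ⟨x, hx⟩ := is_ker t
    rw [hx, hcard]
  have hSne : ∀ t, (S t).Nonempty := by
    intro t
    rw [← Finset.card_pos, hcardS]
    omega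
  -- the two sequence-neighbors of S t
  have neighbors_S : ∀ t K, KAdj G (S t) K → K = S (t+1) ∨ K = S (t+n-1) := by
    intro t K hK
    obtain ⟨x, hx⟩ := is_ker t
    obtain ⟨K1, K2, h12, hiff, -⟩ := hstruct x
    rw [← hx] at hiff
    have e1 : KAdj G (S t) (S (t+1)) := inv t
    have e2 : KAdj G (S t) (S (t+n-1)) := by
      have h := (inv (t+n-1)).symm
      rw [show t+n-1+1 = t+n by omega, hper t] at h
      exact h
    have e3 : S (t+1) ≠ S (t+n-1) := by
      have h := hne2 (t+n-1)
      rw [show t+n-1+2 = (t+1)+n by omega, hper (t+1)] at h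
      exact h
    rcases (hiff K).mp hK with rfl | rfl
    · rcases (hiff _).mp e1 with h | h
      · exact Or.inl h.symm
      · rcases (hiff _).mp e2 with h' | h'
        · exact Or.inr h'.symm
        · exact absurd (h.trans h'.symm) e3
    · rcases (hiff _).mp e1 with h | h
      · rcases (hiff _).mp e2 with h' | h'
        · exact absurd (h.trans h'.symm) e3
        · exact Or.inr h'.symm
      · exact Or.inl h.symm
  -- injectivity below n
  have key : ∀ a b, a < b → b < n → S a ≠ S b := by
    intro a b hab hbn heq
    have h1 : KAdj G (S a) (S (b+1)) := heq ▸ inv b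
    rcases neighbors_S a (S (b+1)) h1 with hcase | hcase
    · -- forward case: period b - a < n
      have hper' := hperiod_of a b (by omega) heq hcase.symm
      have := hmin (b-a) (by omega) hper'
      omega
    · -- reversal case
      have hc0 : S b = S (a+n) := heq.symm.trans (hper a).symm
      have hc1 : S (b+1) = S (a+n-1) := hcase
      have hrev : ∀ t, t + 1 ≤ a + n → S (b+t) = S (a+n-t) ∧ S (b+t+1) = S (a+n-(t+1)) := by
        intro t
        induction t with
        | zero =>
          intro _
          constructor
          · simpa using hc0
          · simpa using hc1
        | succ t ih =>
          intro h
          obtain ⟨e1, e2⟩ := ih (by omega)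
          refine ⟨e2, ?_⟩
          have ha' : S (b+t+2) = otherK G (S (b+t)) (S (b+t+1)) := hS2 (b+t)
          have hb' : S (a+n-(t+2)) = otherK G (S (a+n-(t+2)+2)) (S (a+n-(t+2)+1)) := hback _
          rw [show a+n-(t+2)+2 = a+n-t by omega, show a+n-(t+2)+1 = a+n-(t+1) by omega] at hb'
          show S (b+t+2) = S (a+n-(t+2))
          rw [ha', hb', e1, e2]
      have hD : 0 < a + n - b := by omega
      rcases Nat.even_or_odd (a + n - b) with ⟨sv, hsv⟩ | ⟨sv, hsv⟩
      · -- even: a+n-b = 2sv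
        have hsv1 : 1 ≤ sv := by omega
        have h5 := (hrev (sv+1) (by omega)).1
        rw [show a+n-(sv+1) = b+sv-1 by omega] at h5
        have h6 := hne2 (b+sv-1)
        rw [show b+sv-1+2 = b+(sv+1) by omega] at h6
        exact h6 h5
      · -- odd: a+n-b = 2sv+1
        have h5 := (hrev sv (by omega)).1
        rw [show a+n-sv = b+sv+1 by omega] at h5
        exact hcons (b+sv) h5
  -- every vertex occurs in some kernel of the sequence
  have hstep : ∀ x y, (∃ t, x ∈ S t) → G.Adj x y → ∃ t, y ∈ S t := by
    rintro x y ⟨t, hx⟩ hxy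
    have hkx : ker G x = S t := mem_S_ker t x hx
    obtain ⟨K1, K2, h12, hiff, hN⟩ := hstruct x
    have hyN : y ∈ ker G x ∪ (K1 ∪ K2) := by
      rw [← hN]
      exact Finset.mem_insert_of_mem ((SimpleGraph.mem_neighborFinset ..).mpr hxy)
    rcases Finset.mem_union.mp hyN with h | h
    · exact ⟨t, hkx ▸ h⟩
    · rcases Finset.mem_union.mp h with h' | h'
      · have hK : KAdj G (S t) K1 := hkx ▸ (hiff K1).mpr (Or.inl rfl)
        rcases neighbors_S t K1 hK with rfl | rfl
        · exact ⟨t+1, h'⟩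
        · exact ⟨t+n-1, h'⟩
      · have hK : KAdj G (S t) K2 := hkx ▸ (hiff K2).mpr (Or.inr rfl)
        rcases neighbors_S t K2 hK with rfl | rfl
        · exact ⟨t+1, h'⟩
        · exact ⟨t+n-1, h'⟩
  have hreach : ∀ x : V, ∃ t, x ∈ S t := by
    have hwalk : ∀ (u x : V), G.Walk u x → (∃ t, u ∈ S t) → ∃ t, x ∈ S t := by
      intro u x w
      induction w with
      | nil => exact id
      | cons h p ih => intro hu; exact ih (hstep _ _ hu h)
    intro x
    exact hwalk v0 x (hconn.preconnected v0 x).some ⟨0, by rw [hS0]; exact hself v0⟩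
  -- switch to `Fin n` indexing
  obtain ⟨m, rfl⟩ : ∃ m, n = m + 2 := ⟨n - 2, by omega⟩
  have hvalsucc : ∀ i : Fin (m+2), ((i+1 : Fin (m+2)) : ℕ) = (i.val + 1) % (m+2) := by
    intro i
    simp [Fin.add_def]
  have hSsucc : ∀ i : Fin (m+2), S ((i+1 : Fin (m+2)) : ℕ) = S (i.val + 1) := by
    intro i
    rw [hvalsucc]
    exact hmod _
  have hSinj : ∀ i j : Fin (m+2), S i.val = S j.val → i = j := by
    intro i j h
    rcases lt_trichotomy i.val j.val with hlt | he | hlt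
    · exact absurd h (key _ _ hlt j.isLt)
    · exact Fin.ext he
    · exact absurd h.symm (key _ _ hlt i.isLt)
  have hsurjS : ∀ x : V, ∃ i : Fin (m+2), ker G x = S i.val := by
    intro x
    obtain ⟨t, hx⟩ := hreach x
    refine ⟨⟨t % (m+2), Nat.mod_lt _ (by omega)⟩, ?_⟩
    rw [mem_S_ker t x hx]
    exact (hmod t).symm
  have conv1 : ∀ a b : Fin (m+2), S a.val = S (b.val+1) → a = b + 1 := by
    intro a b hab
    apply hSinj
    rw [hSsucc b]
    exact hab
  have hplusone_ne : ∀ i : Fin (m+2), i ≠ i + 1 := by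
    intro i h
    have e : S i.val = S ((i+1 : Fin (m+2)) : ℕ) := congrArg (fun j : Fin (m+2) => S j.val) h
    exact hcons i.val (e.trans (hSsucc i))
  have hplus2_ne : ∀ i : Fin (m+2), i + 1 + 1 ≠ i := by
    intro i h
    have e1 : S ((i+1+1 : Fin (m+2)) : ℕ) = S (i.val + 2) := by
      rw [hSsucc (i+1), hvalsucc i]
      exact hmod2 ((i.val+1) % (m+2) + 1) (i.val+2) (by rw [Nat.mod_add_mod])
    have e2 : S (i.val + 2) = S i.val := by
      rw [← e1, h]
    exact hne2 i.val e2
  have hKAdj_succ : ∀ t, G.IsNClique G.cliqueNum (S t ∪ S (t+1)) := fun t => (inv t).2.2.2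
  -- every maximum clique is a union of consecutive kernels
  have hclq : ∀ A, G.IsNClique G.cliqueNum A →
      ∃ i : Fin (m+2), A = S i.val ∪ S (i.val + 1) := by
    intro A hA
    have hAne : A.Nonempty := by
      rw [← Finset.card_pos, hA.card_eq, hω]; omega
    obtain ⟨v, hv⟩ := hAne
    obtain ⟨w, hdisj, hAeq⟩ := hsplit A hA v hv
    obtain ⟨i, hkv⟩ := hsurjS v
    have hKA : KAdj G (S i.val) (ker G w) := by
      rw [← hkv]
      exact ⟨⟨v, rfl⟩, ⟨w, rfl⟩, hdisj, hAeq ▸ hA⟩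
    rcases neighbors_S i.val _ hKA with hw | hw
    · exact ⟨i, by rw [hAeq, hkv, hw]⟩
    · refine ⟨⟨(i.val + (m+2) - 1) % (m+2), Nat.mod_lt _ (by omega)⟩, ?_⟩
      have e1 : S ((i.val + (m+2) - 1) % (m+2)) = S (i.val + (m+2) - 1) := hmod _
      have e2 : S ((i.val + (m+2) - 1) % (m+2) + 1) = S i.val := by
        rw [hmod2 ((i.val + (m+2) - 1) % (m+2) + 1) (i.val + (m+2))
          (by rw [Nat.mod_add_mod, show i.val + (m+2) - 1 + 1 = i.val + (m+2) from by omega])]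
        exact hper i.val
      rw [hAeq, hkv, hw]
      rw [e1, e2, Finset.union_comm]
  -- the equivalence with `Fin (m+2)` for the intersection graph
  have hQmem : ∀ i : Fin (m+2),
      (S i.val ∪ S (i.val+1)) ∈ {s : Finset V | G.IsNClique G.cliqueNum s} :=
    fun i => hKAdj_succ i.val
  set fQ : Fin (m+2) → {s : Finset V | G.IsNClique G.cliqueNum s} :=
    fun i => ⟨S i.val ∪ S (i.val+1), hQmem i⟩ with hfQ
  have hfinj : Function.Injective fQ := by
    intro i j h
    have h' : S i.val ∪ S (i.val+1) = S j.val ∪ S (j.val+1) := congrArg Subtype.val h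
    obtain ⟨x, hx⟩ := hSne i.val
    have hx2 : x ∈ S j.val ∪ S (j.val+1) := by
      rw [← h']; exact Finset.mem_union_left _ hx
    obtain ⟨y, hy⟩ := hSne (i.val+1)
    have hy2 : y ∈ S j.val ∪ S (j.val+1) := by
      rw [← h']; exact Finset.mem_union_right _ hy
    have hx3 : S i.val = S j.val ∨ S i.val = S (j.val+1) := by
      rcases Finset.mem_union.mp hx2 with h'' | h''
      · exact Or.inl ((mem_S_ker _ _ hx).symm.trans (mem_S_ker _ _ h''))
      · exact Or.inr ((mem_S_ker _ _ hx).symm.trans (mem_S_ker _ _ h''))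
    have hy3 : S (i.val+1) = S j.val ∨ S (i.val+1) = S (j.val+1) := by
      rcases Finset.mem_union.mp hy2 with h'' | h''
      · exact Or.inl ((mem_S_ker _ _ hy).symm.trans (mem_S_ker _ _ h''))
      · exact Or.inr ((mem_S_ker _ _ hy).symm.trans (mem_S_ker _ _ h''))
    rcases hx3 with h1 | h1
    · exact hSinj i j h1
    · have hij : i = j + 1 := conv1 i j h1
      rcases hy3 with h2 | h2
      · have hij2 : i + 1 = j := hSinj (i+1) j ((hSsucc i).trans h2)
        rw [hij] at hij2
        exact absurd hij2 (hplus2_ne j)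
      · have hij3 : i + 1 = j + 1 := hSinj (i+1) (j+1)
          (((hSsucc i).trans h2).trans (hSsucc j).symm)
        exact add_right_cancel hij3
  have hfsurj : Function.Surjective fQ := by
    rintro ⟨A, hA⟩
    obtain ⟨i, hi⟩ := hclq A hA
    exact ⟨i, Subtype.ext hi.symm⟩
  -- adjacency in the cycle graph
  have hcyc_adj : ∀ i j : Fin (m+2),
      (cycleGraph (m+2)).Adj i j ↔ (j = i + 1 ∨ i = j + 1) := by
    intro i j
    rw [cycleGraph_adj]
    constructor
    · rintro (h | h)
      · exact Or.inr ((eq_add_of_sub_eq h).trans (add_comm 1 j))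
      · exact Or.inl ((eq_add_of_sub_eq h).trans (add_comm 1 i))
    · rintro (rfl | rfl)
      · exact Or.inr (add_sub_cancel_left i 1)
      · exact Or.inl (add_sub_cancel_left j 1)
  have hrel1 : ∀ i j : Fin (m+2),
      (interGraph {s : Finset V | G.IsNClique G.cliqueNum s}).Adj (fQ i) (fQ j) ↔
        (cycleGraph (m+2)).Adj i j := by
    intro i j
    rw [hcyc_adj]
    constructor
    · rintro ⟨hne, x, hx⟩
      have hij : i ≠ j := fun hh => hne (by rw [hh])
      have hx1 : x ∈ S i.val ∪ S (i.val+1) := (Finset.mem_inter.mp hx).1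
      have hx2 : x ∈ S j.val ∪ S (j.val+1) := (Finset.mem_inter.mp hx).2
      have e1 : ker G x = S i.val ∨ ker G x = S (i.val+1) := by
        rcases Finset.mem_union.mp hx1 with h'' | h''
        · exact Or.inl (mem_S_ker _ _ h'')
        · exact Or.inr (mem_S_ker _ _ h'')
      have e2 : ker G x = S j.val ∨ ker G x = S (j.val+1) := by
        rcases Finset.mem_union.mp hx2 with h'' | h''
        · exact Or.inl (mem_S_ker _ _ h'')
        · exact Or.inr (mem_S_ker _ _ h'')
      rcases e1 with h1 | h1 <;> rcases e2 with h2 | h2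
      · exact absurd (hSinj i j (h1.symm.trans h2)) hij
      · exact Or.inr (conv1 i j (h1.symm.trans h2))
      · exact Or.inl (conv1 j i (h2.symm.trans h1))
      · have := hSinj (i+1) (j+1)
          (((hSsucc i).trans (h1.symm.trans h2)).trans (hSsucc j).symm)
        exact absurd (add_right_cancel this) hij
    · rintro (rfl | rfl)
      · refine ⟨fun hh => hplusone_ne i (hfinj hh), ?_⟩
        obtain ⟨y, hy⟩ := hSne (i.val+1)
        refine ⟨y, Finset.mem_inter.mpr ⟨Finset.mem_union_right _ hy, ?_⟩⟩
        refine Finset.mem_union_left _ ?_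
        rw [hSsucc i]
        exact hy
      · refine ⟨fun hh => hplusone_ne j ((hfinj hh).symm), ?_⟩
        obtain ⟨y, hy⟩ := hSne (j.val+1)
        refine ⟨y, Finset.mem_inter.mpr ⟨?_, Finset.mem_union_right _ hy⟩⟩
        refine Finset.mem_union_left _ ?_
        rw [hSsucc j]
        exact hy
  have iso1 : Nonempty (interGraph {s : Finset V | G.IsNClique G.cliqueNum s} ≃g
      cycleGraph (m+2)) :=
    ⟨(SimpleGraph.Iso.symm ⟨Equiv.ofBijective fQ ⟨hfinj, hfsurj⟩,
      @fun i j => hrel1 i j⟩)⟩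
  -- the blow-up isomorphism
  have hScard : ∀ i : Fin (m+2), (S i.val).card = r := fun i => hcardS i.val
  set ψ : Fin (m+2) × Fin r → V :=
    fun p => ((Finset.equivFinOfCardEq (hScard p.1)).symm p.2 : V) with hψdef
  have hψmem : ∀ p, ψ p ∈ S p.1.val := fun p => Finset.coe_mem _
  have hψinj : Function.Injective ψ := by
    rintro ⟨i, j⟩ ⟨i', j'⟩ h
    have hi : i = i' := by
      apply hSinj
      rw [← mem_S_ker i.val _ (hψmem (i,j)), ← mem_S_ker i'.val _ (hψmem (i',j'))]
      rw [show ψ (i,j) = ψ (i',j') from h]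
    subst hi
    have h2 : (Finset.equivFinOfCardEq (hScard i)).symm j =
        (Finset.equivFinOfCardEq (hScard i)).symm j' := Subtype.ext h
    have h3 : j = j' := (Finset.equivFinOfCardEq (hScard i)).symm.injective h2
    rw [h3]
  have hψsurj : Function.Surjective ψ := by
    intro x
    obtain ⟨i, hi⟩ := hsurjS x
    have hx : x ∈ S i.val := by rw [← hi]; exact hself x
    refine ⟨(i, Finset.equivFinOfCardEq (hScard i) ⟨x, hx⟩), ?_⟩
    rw [hψdef]
    simp
  have hrel2 : ∀ p q, G.Adj (ψ p) (ψ q) ↔ (blowup (cycleGraph (m+2)) r).Adj p q := by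
    rintro ⟨i, j⟩ ⟨i', j'⟩
    constructor
    · intro h
      have hx := hψmem (i, j)
      have hy := hψmem (i', j')
      have hkx : ker G (ψ (i,j)) = S i.val := mem_S_ker _ _ hx
      have hky : ker G (ψ (i',j')) = S i'.val := mem_S_ker _ _ hy
      obtain ⟨K1, K2, h12, hiff, hN⟩ := hstruct (ψ (i,j))
      have hyN : ψ (i',j') ∈ ker G (ψ (i,j)) ∪ (K1 ∪ K2) := by
        rw [← hN]
        exact Finset.mem_insert_of_mem ((SimpleGraph.mem_neighborFinset ..).mpr h)
      rcases Finset.mem_union.mp hyN with hcase | hcase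
      · -- same kernel
        have hsame : S i'.val = S i.val := by
          rw [← hky, ← hkx]
          exact hpart _ _ hcase
        have hii : i = i' := (hSinj _ _ hsame).symm
        refine Or.inr ⟨hii, fun hjj => ?_⟩
        have : ψ (i,j) = ψ (i',j') := by rw [hii, show j = j' from hjj]
        exact h.ne this
      · -- adjacent kernels
        have hKy : KAdj G (S i.val) (ker G (ψ (i',j'))) := by
          rw [← hkx]
          rcases Finset.mem_union.mp hcase with h' | h'
          · have hK1 : KAdj G (ker G (ψ (i,j))) K1 := (hiff K1).mpr (Or.inl rfl)
            obtain ⟨a, ha⟩ := hK1.2.1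
            have : ker G (ψ (i',j')) = K1 := by
              rw [ha] at h' ⊢
              exact hpart _ _ h'
            rw [this]
            exact hK1
          · have hK2 : KAdj G (ker G (ψ (i,j))) K2 := (hiff K2).mpr (Or.inr rfl)
            obtain ⟨a, ha⟩ := hK2.2.1
            have : ker G (ψ (i',j')) = K2 := by
              rw [ha] at h' ⊢
              exact hpart _ _ h'
            rw [this]
            exact hK2
        rcases neighbors_S i.val _ hKy with hw | hw
        · -- i' = i + 1
          have : i' = i + 1 := conv1 i' i (hky.symm.trans hw)
          exact Or.inl ((hcyc_adj i i').mpr (Or.inl this))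
        · -- i = i' + 1
          have hidx : i'.val = (i.val + (m+2) - 1) % (m+2) := by
            have e1 : S i'.val = S ((i.val + (m+2) - 1) % (m+2)) := by
              rw [← hky, hw]
              exact (hmod _).symm
            exact congrArg Fin.val
              (hSinj i' ⟨(i.val + (m+2) - 1) % (m+2), Nat.mod_lt _ (by omega)⟩ e1)
          have hii : i' + 1 = i := by
            apply hSinj
            rw [hSsucc i', hidx]
            rw [hmod2 ((i.val + (m+2) - 1) % (m+2) + 1) (i.val + (m+2))
              (by rw [Nat.mod_add_mod,
                show i.val + (m+2) - 1 + 1 = i.val + (m+2) from by omega])]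
            exact hper i.val
          exact Or.inl ((hcyc_adj i i').mpr (Or.inr hii.symm))
    · rintro (hcyc | ⟨hii, hjj⟩)
      · have hKA : KAdj G (S i.val) (S i'.val) := by
          rcases (hcyc_adj i i').mp hcyc with hcc | hcc
          · have : S i'.val = S (i.val + 1) := by rw [hcc]; exact hSsucc i
            rw [this]
            exact inv i.val
          · have : S i.val = S (i'.val + 1) := by rw [hcc]; exact hSsucc i'
            rw [this]
            exact (inv i'.val).symm
        have hxy : ψ (i,j) ≠ ψ (i',j') := by
          intro he
          exact Finset.disjoint_left.mp hKA.2.2.1 (hψmem (i,j)) (he ▸ hψmem (i',j'))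
        exact hKA.2.2.2.1 (Finset.mem_coe.mpr (Finset.mem_union_left _ (hψmem (i,j))))
          (Finset.mem_coe.mpr (Finset.mem_union_right _ (hψmem (i',j')))) hxy
      · -- same copy of the clique K_r
        have hii' : i = i' := hii
        subst hii'
        have hxy : ψ (i,j) ≠ ψ (i,j') := by
          intro he
          exact hjj (congrArg Prod.snd (hψinj he))
        have hxk : ψ (i,j) ∈ ker G (ψ (i,j')) :=
          (mem_S_ker i.val _ (hψmem (i,j'))).symm ▸ hψmem (i,j)
        exact hadj_ker _ _ hxk hxy
  have iso2 : Nonempty (G ≃g blowup (cycleGraph (m+2)) r) :=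
    ⟨SimpleGraph.Iso.symm ⟨Equiv.ofBijective ψ ⟨hψinj, hψsurj⟩,
      @fun p q => hrel2 p q⟩⟩
  exact ⟨m+2, by omega, iso1, iso2⟩
end Aux

/-- In a connected vertex-transitive graph with `ω ≥ (2/3)(Δ+1)`, either the
intersection graph of the maximum cliques is edgeless, or it is a cycle and `G` is
the blow-up of that cycle by `K_{ω/2}`. -/
theorem transitive_clustering_big_cliques {V : Type*} [Fintype V] [DecidableEq V]
    (G : SimpleGraph V) [DecidableRel G.Adj]
    (hconn : G.Connected) (hvt : VertexTransitive G)
    (hω : 3 * G.cliqueNum ≥ 2 * (G.maxDegree + 1)) :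
    (∀ s t : Finset V, G.IsNClique G.cliqueNum s → G.IsNClique G.cliqueNum t →
      s ≠ t → Disjoint s t) ∨
    (∃ n : ℕ, 3 ≤ n ∧ ∃ r : ℕ, 2 * r = G.cliqueNum ∧
      Nonempty (interGraph {s : Finset V | G.IsNClique G.cliqueNum s} ≃g cycleGraph n) ∧
      Nonempty (G ≃g blowup (cycleGraph n) r)) := by
  classical
  by_cases hd : ∀ s t : Finset V, G.IsNClique G.cliqueNum s → G.IsNClique G.cliqueNum t →
      s ≠ t → Disjoint s t
  · exact Or.inl hd
  right
  push_neg at hd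
  obtain ⟨s, t, hs, ht, hst, hnd⟩ := hd
  obtain ⟨v0, hv0s, hv0t⟩ := Finset.not_disjoint_iff.mp hnd
  -- every vertex lies in two distinct maximum cliques
  have hm2 : ∀ v, ∃ A B, A ∈ cliquesAt G v ∧ B ∈ cliquesAt G v ∧ A ≠ B := by
    intro v
    obtain ⟨e, he⟩ := hvt v0 v
    refine ⟨s.image e, t.image e, ?_, ?_, ?_⟩
    · exact mem_cliquesAt.mpr ⟨isNClique_image e hs, he ▸ Finset.mem_image_of_mem e hv0s⟩
    · exact mem_cliquesAt.mpr ⟨isNClique_image e ht, he ▸ Finset.mem_image_of_mem e hv0t⟩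
    · intro h
      exact hst (Finset.image_injective e.injective h)
  have hQne : ∀ v, (cliquesAt G v).Nonempty := by
    intro v; obtain ⟨A, B, hA, hB, hAB⟩ := hm2 v; exact ⟨A, hA⟩
  have hself : ∀ x, x ∈ ker G x := fun x => mem_ker_self (hQne x)
  have hqcard : ∀ u v, (cliquesAt G u).card = (cliquesAt G v).card := by
    intro u v
    obtain ⟨e, he⟩ := hvt u v
    rw [← he, cliquesAt_image e u,
      Finset.card_image_of_injective _ (Finset.image_injective e.injective)]
  have hkcard0 : ∀ u v, (ker G u).card = (ker G v).card := by
    intro u v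
    obtain ⟨e, he⟩ := hvt u v
    rw [← he, ker_image e u, Finset.card_image_of_injective _ e.injective]
  have hNsub : ∀ v A, A ∈ cliquesAt G v → A ⊆ insert v (G.neighborFinset v) := by
    intro v A hA x hx
    rcases eq_or_ne x v with rfl | hxv
    · exact Finset.mem_insert_self x _
    · refine Finset.mem_insert_of_mem (SimpleGraph.mem_neighborFinset .. |>.mpr ?_)
      exact ((mem_cliquesAt.1 hA).1.1 (Finset.mem_coe.mpr (mem_cliquesAt.1 hA).2)
        (Finset.mem_coe.mpr hx) (Ne.symm hxv))
  have hNcard : ∀ v : V, (insert v (G.neighborFinset v)).card ≤ G.maxDegree + 1 := by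
    intro v
    calc (insert v (G.neighborFinset v)).card ≤ (G.neighborFinset v).card + 1 :=
          Finset.card_insert_le _ _
      _ = G.degree v + 1 := by rw [SimpleGraph.card_neighborFinset_eq_degree]
      _ ≤ G.maxDegree + 1 := by have := G.degree_le_maxDegree v; omega
  have hkerlb : ∀ v, G.cliqueNum ≤ 2 * (ker G v).card := by
    intro v
    have h1 := hajnal (cliquesAt G v) (hQne v) (fun A hA => (mem_cliquesAt.1 hA).1)
    have h2 : ((cliquesAt G v).sup id).card ≤ G.maxDegree + 1 := by
      have hsub : (cliquesAt G v).sup id ⊆ insert v (G.neighborFinset v) := by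
        intro x hx
        obtain ⟨A, hA, hxA⟩ := Finset.mem_sup.mp hx
        exact hNsub v A hA hxA
      exact le_trans (Finset.card_le_card hsub) (hNcard v)
    have h3 : (ker G v).card = ((cliquesAt G v).inf id).card := rfl
    omega
  have hpart : ∀ x y, x ∈ ker G y → ker G x = ker G y := by
    intro x y hx
    have hsub : cliquesAt G y ⊆ cliquesAt G x := by
      intro A hA
      exact mem_cliquesAt.mpr ⟨(mem_cliquesAt.1 hA).1, ker_subset hA hx⟩
    have heq : cliquesAt G y = cliquesAt G x :=
      Finset.eq_of_subset_of_card_le hsub (le_of_eq (hqcard x y))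
    rw [ker, ker, heq]
  have hsplit' : ∀ A, G.IsNClique G.cliqueNum A → ∀ v ∈ A,
      ∃ w, Disjoint (ker G v) (ker G w) ∧ A = ker G v ∪ ker G w ∧
        G.cliqueNum = 2 * (ker G v).card := by
    intro A hA v hv
    have hAv : A ∈ cliquesAt G v := mem_cliquesAt.mpr ⟨hA, hv⟩
    have hkA : ker G v ⊆ A := ker_subset hAv
    have hne : (A \ ker G v).Nonempty := by
      by_contra h
      rw [Finset.not_nonempty_iff_eq_empty, Finset.sdiff_eq_empty_iff_subset] at h
      have hAeq : A = ker G v := Finset.Subset.antisymm h hkA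
      obtain ⟨B, C, hB, hC, hBC⟩ := hm2 v
      have hD : ∃ D, D ∈ cliquesAt G v ∧ D ≠ A := by
        rcases eq_or_ne B A with rfl | h'
        · exact ⟨C, hC, fun hh => hBC hh.symm⟩
        · exact ⟨B, hB, h'⟩
      obtain ⟨D, hD, hDA⟩ := hD
      have h1 : A ⊆ D := hAeq ▸ ker_subset hD
      have h2 : A = D := Finset.eq_of_subset_of_card_le h1
        (by rw [(mem_cliquesAt.1 hD).1.card_eq, hA.card_eq])
      exact hDA h2.symm
    obtain ⟨w, hw⟩ := hne
    have hwA : w ∈ A := (Finset.mem_sdiff.mp hw).1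
    have hwk : w ∉ ker G v := (Finset.mem_sdiff.mp hw).2
    have hkwA : ker G w ⊆ A := ker_subset (mem_cliquesAt.mpr ⟨hA, hwA⟩)
    have hdisj : Disjoint (ker G v) (ker G w) := by
      rw [Finset.disjoint_left]
      intro x hx1 hx2
      have e1 : ker G x = ker G v := hpart x v hx1
      have e2 : ker G x = ker G w := hpart x w hx2
      exact hwk (by rw [← e1, e2]; exact hself w)
    have hsubu : ker G v ∪ ker G w ⊆ A := Finset.union_subset hkA hkwA
    have hcards : (ker G v).card + (ker G w).card ≤ A.card := by
      rw [← Finset.card_union_of_disjoint hdisj]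
      exact Finset.card_le_card hsubu
    have lv := hkerlb v
    have lw := hkerlb w
    have hcc := hA.card_eq
    have hkvw : (ker G v).card = (ker G w).card := hkcard0 v w
    have hunion : A = ker G v ∪ ker G w := by
      refine (Finset.eq_of_subset_of_card_le hsubu ?_).symm
      rw [Finset.card_union_of_disjoint hdisj]
      omega
    exact ⟨w, hdisj, hunion, by omega⟩
  have hsplit : ∀ A, G.IsNClique G.cliqueNum A → ∀ v ∈ A,
      ∃ w, Disjoint (ker G v) (ker G w) ∧ A = ker G v ∪ ker G w := by
    intro A hA v hv
    obtain ⟨w, h1, h2, -⟩ := hsplit' A hA v hv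
    exact ⟨w, h1, h2⟩
  -- the common kernel size
  set r := (ker G v0).card with hrdef
  have hcard : ∀ x, (ker G x).card = r := fun x => hkcard0 x v0
  have hr : 1 ≤ r := by
    have := hself v0
    have := Finset.card_pos.mpr ⟨v0, this⟩
    omega
  have hωr : G.cliqueNum = 2 * r := by
    obtain ⟨A, B, hA, hB, hAB⟩ := hm2 v0
    obtain ⟨w, -, -, h⟩ := hsplit' A (mem_cliquesAt.1 hA).1 v0 (mem_cliquesAt.1 hA).2
    rw [h]
  have hadj_ker : ∀ x y, x ∈ ker G y → x ≠ y → G.Adj x y := by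
    intro x y hx hxy
    obtain ⟨A, hA⟩ := hQne y
    have hxA : x ∈ A := ker_subset hA hx
    have hyA : y ∈ A := (mem_cliquesAt.1 hA).2
    exact (mem_cliquesAt.1 hA).1.1 (Finset.mem_coe.mpr hxA) (Finset.mem_coe.mpr hyA) hxy
  have hstruct : ∀ x, ∃ K1 K2, K1 ≠ K2 ∧ (∀ K, KAdj G (ker G x) K ↔ K = K1 ∨ K = K2) ∧
      insert x (G.neighborFinset x) = ker G x ∪ (K1 ∪ K2) := by
    intro x
    obtain ⟨A, B, hA, hB, hAB⟩ := hm2 x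
    obtain ⟨a, hdA, hAeq, -⟩ := hsplit' A (mem_cliquesAt.1 hA).1 x (mem_cliquesAt.1 hA).2
    obtain ⟨b, hdB, hBeq, -⟩ := hsplit' B (mem_cliquesAt.1 hB).1 x (mem_cliquesAt.1 hB).2
    have hK12 : ker G a ≠ ker G b := by
      intro h
      exact hAB (hAeq.trans (h ▸ hBeq.symm))
    have hdab : Disjoint (ker G a) (ker G b) := by
      rw [Finset.disjoint_left]
      intro z hz1 hz2
      exact hK12 ((hpart z a hz1).symm.trans (hpart z b hz2))
    have huAB : ker G x ∪ (ker G a ∪ ker G b) = A ∪ B := by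
      rw [hAeq, hBeq]
      ext z
      simp only [Finset.mem_union]
      tauto
    have hsubN : ker G x ∪ (ker G a ∪ ker G b) ⊆ insert x (G.neighborFinset x) := by
      rw [huAB]
      exact Finset.union_subset (hNsub x A hA) (hNsub x B hB)
    have hcardU : (ker G x ∪ (ker G a ∪ ker G b)).card = 3 * r := by
      rw [Finset.card_union_of_disjoint (by
        rw [Finset.disjoint_union_right]; exact ⟨hdA, hdB⟩),
        Finset.card_union_of_disjoint hdab, hcard, hcard, hcard]
      ring
    have hNeq : insert x (G.neighborFinset x) = ker G x ∪ (ker G a ∪ ker G b) := by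
      refine Finset.eq_of_subset_of_card_le hsubN ?_ |>.symm
      have := hNcard x
      omega
    refine ⟨ker G a, ker G b, hK12, ?_, hNeq⟩
    intro K
    constructor
    · rintro ⟨-, ⟨y, rfl⟩, hdK, hcl⟩
      have hCx : (ker G x ∪ ker G y) ∈ cliquesAt G x :=
        mem_cliquesAt.mpr ⟨hcl, Finset.mem_union_left _ (hself x)⟩
      have hyN : y ∈ ker G x ∪ (ker G a ∪ ker G b) := by
        rw [← hNeq]
        exact (hNsub x _ hCx) (Finset.mem_union_right _ (hself y))
      have hynk : y ∉ ker G x := fun h => Finset.disjoint_left.mp hdK h (hself y)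
      rcases Finset.mem_union.mp hyN with h | h
      · exact absurd h hynk
      · rcases Finset.mem_union.mp h with h' | h'
        · exact Or.inl (hpart y a h')
        · exact Or.inr (hpart y b h')
    · rintro (rfl | rfl)
      · exact ⟨⟨x, rfl⟩, ⟨a, rfl⟩, hdA, hAeq ▸ (mem_cliquesAt.1 hA).1⟩
      · exact ⟨⟨x, rfl⟩, ⟨b, rfl⟩, hdB, hBeq ▸ (mem_cliquesAt.1 hB).1⟩
  obtain ⟨n, hn3, h1, h2⟩ :=
    stage2 hconn v0 r hr hωr hpart hcard hself hadj_ker hsplit hstruct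
  exact ⟨n, hn3, r, hωr.symm, h1, h2⟩
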